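/- Let p ∈ ℝ⟨x⟩ be symmetric, quasi-convex, let n be a positive integer and let A ∈ 𝕊ₙ(ℝ) be positive definite. Then X ∈ 𝕊ₙ(ℝ^g) lies in the (topological) boundary of the set D(A) = {Y ∈ 𝕊ₙ(ℝ^g) : A − p(Y) is positive definite} if and only if A − p(X) is positive semidefinite and has a non-trivial kernel. -/

import Mathlib

open scoped BigOperators

noncomputable section

/-- Evaluation of a free polynomial `p ∈ ℝ⟨x₁,…,x_g⟩` at a `g`-tuple of square matrices;
the empty word evaluates to the identity matrix. -/
def evalMat {g : ℕ} {ι : Type} [Fintype ι] [DecidableEq ι]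
    (p : FreeAlgebra ℝ (Fin g)) (X : Fin g → Matrix ι ι ℝ) : Matrix ι ι ℝ :=
  FreeAlgebra.lift ℝ X p

/-- `p` is a hermitian sum of squares: `p = Σⱼ hⱼ* hⱼ`. -/
def IsHermitianSOS {g : ℕ} (p : FreeAlgebra ℝ (Fin g)) : Prop :=
  ∃ (m : ℕ) (h : Fin m → FreeAlgebra ℝ (Fin g)), p = ∑ j, star (h j) * h j

/-- `p` is quasi-convex: `p(0) = 0` and for every positive integer `n` and every
positive definite `A ∈ 𝕊ₙ(ℝ)`, the set `{X ∈ 𝕊ₙ(ℝ^g) : A − p(X) ≻ 0}` is convex. -/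
def IsQuasiConvex {g : ℕ} (p : FreeAlgebra ℝ (Fin g)) : Prop :=
  (∀ n : ℕ, evalMat p (fun _ => (0 : Matrix (Fin n) (Fin n) ℝ)) = 0) ∧
  ∀ n : ℕ, 0 < n → ∀ A : Matrix (Fin n) (Fin n) ℝ, A.PosDef →
    Convex ℝ {X : Fin g → Matrix (Fin n) (Fin n) ℝ |
      (∀ j, (X j).IsSymm) ∧ (A - evalMat p X).PosDef}

/-- The space of free polynomials homogeneous of degree one (linear span of the variables).  -/
def degOne (g : ℕ) : Submodule ℝ (FreeAlgebra ℝ (Fin g)) :=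
  Submodule.span ℝ (Set.range (FreeAlgebra.ι ℝ : Fin g → FreeAlgebra ℝ (Fin g)))

/-- The space of free polynomials of degree at most `k`. -/
def degLE (g k : ℕ) : Submodule ℝ (FreeAlgebra ℝ (Fin g)) :=
  ⨆ i ∈ Finset.range (k + 1), (degOne g) ^ i

/-- `M` has a positive eigenvalue (with corresponding eigenvector). -/
def HasPosEigenvalue {n : ℕ} (M : Matrix (Fin n) (Fin n) ℝ) : Prop :=
  ∃ (lam : ℝ) (v : Fin n → ℝ), 0 < lam ∧ v ≠ 0 ∧ M.mulVec v = lam • v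

/-- The directional derivative `p′(X)[H]`: the coefficient of `t` in `t ↦ p(X + tH)`. -/
def derivEval {g n : ℕ} (p : FreeAlgebra ℝ (Fin g))
    (X H : Fin g → Matrix (Fin n) (Fin n) ℝ) : Matrix (Fin n) (Fin n) ℝ :=
  (FreeAlgebra.lift ℝ
      (fun j => Polynomial.C (X j) + Polynomial.X * Polynomial.C (H j)) p).coeff 1

/-- The Hessian `p″(X)[H]`: twice the coefficient of `t²` in `t ↦ p(X + tH)`. -/
def hessEval {g n : ℕ} (p : FreeAlgebra ℝ (Fin g))
    (X H : Fin g → Matrix (Fin n) (Fin n) ℝ) : Matrix (Fin n) (Fin n) ℝ :=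
  (2 : ℝ) • (FreeAlgebra.lift ℝ
      (fun j => Polynomial.C (X j) + Polynomial.X * Polynomial.C (H j)) p).coeff 2

/-- The constant term of a free polynomial (so that `p(0)` is `constantTerm p` times the
identity matrix). -/
def constantTerm {g : ℕ} (p : FreeAlgebra ℝ (Fin g)) : ℝ :=
  FreeAlgebra.lift ℝ (fun _ : Fin g => (0 : ℝ)) p

/-- Evaluation of a word `w = x_{j₁}⋯x_{j_k}` at a tuple of matrices: `X_{j₁}⋯X_{j_k}`. -/
def wordEval {g n : ℕ} (X : Fin g → Matrix (Fin n) (Fin n) ℝ)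
    (w : FreeMonoid (Fin g)) : Matrix (Fin n) (Fin n) ℝ :=
  (w.toList.map X).prod

namespace Aux

variable {g n : ℕ}

lemma evalMat_continuous (p : FreeAlgebra ℝ (Fin g)) :
    Continuous fun Y : Fin g → Matrix (Fin n) (Fin n) ℝ => evalMat p Y := by
  induction p using FreeAlgebra.induction with
  | grade0 r =>
      simpa only [evalMat, AlgHom.commutes] using
        (continuous_const : Continuous fun _ : Fin g → Matrix (Fin n) (Fin n) ℝ =>
          algebraMap ℝ (Matrix (Fin n) (Fin n) ℝ) r)
  | grade1 j =>
      simpa only [evalMat, FreeAlgebra.lift_ι_apply] using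
        (continuous_apply j : Continuous fun Y : Fin g → Matrix (Fin n) (Fin n) ℝ => Y j)
  | mul a b ha hb =>
      simp only [evalMat, map_mul] at *
      exact ha.matrix_mul hb
  | add a b ha hb =>
      simp only [evalMat, map_add] at *
      exact ha.add hb

lemma star_of_isSymm {M : Matrix (Fin n) (Fin n) ℝ} (h : M.IsSymm) : star M = M := by
  ext i j
  have := congrFun (congrFun h i) j
  simpa [Matrix.star_apply, Matrix.transpose_apply] using this

lemma evalMat_star (X : Fin g → Matrix (Fin n) (Fin n) ℝ) (hX : ∀ j, (X j).IsSymm)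
    (p : FreeAlgebra ℝ (Fin g)) : evalMat (star p) X = star (evalMat p X) := by
  induction p using FreeAlgebra.induction with
  | grade0 r =>
      simp only [evalMat, FreeAlgebra.star_algebraMap, AlgHom.commutes]
      rw [Matrix.star_eq_conjTranspose]
      ext i j
      simp [Matrix.algebraMap_matrix_apply, Matrix.conjTranspose_apply]
      aesop
  | grade1 j =>
      simp only [evalMat, FreeAlgebra.star_ι, FreeAlgebra.lift_ι_apply]
      exact (star_of_isSymm (hX j)).symm
  | mul a b ha hb =>
      simp only [evalMat, star_mul, map_mul] at *
      rw [ha, hb]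
  | add a b ha hb =>
      simp only [evalMat, star_add, map_add] at *
      rw [ha, hb]

lemma isHermitian_sub (A : Matrix (Fin n) (Fin n) ℝ) (hA : A.IsHermitian)
    {p : FreeAlgebra ℝ (Fin g)} (hsym : star p = p)
    (X : Fin g → Matrix (Fin n) (Fin n) ℝ) (hX : ∀ j, (X j).IsSymm) :
    (A - evalMat p X).IsHermitian := by
  refine hA.sub ?_
  rw [Matrix.IsHermitian, ← Matrix.star_eq_conjTranspose, ← evalMat_star X hX, hsym]

end Aux

namespace Aux2
open scoped Matrix

variable {n : ℕ}

lemma quad_lb {M : Matrix (Fin n) (Fin n) ℝ} (hn : 0 < n) (hM : M.PosDef) :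
    ∃ c > 0, ∀ v : Fin n → ℝ, c * ‖v‖ ^ 2 ≤ v ⬝ᵥ M *ᵥ v := by
  have hcont : Continuous fun v : Fin n → ℝ => v ⬝ᵥ M *ᵥ v :=
    continuous_id.dotProduct (continuous_const.matrix_mulVec continuous_id)
  have hne : (Metric.sphere (0 : Fin n → ℝ) 1).Nonempty := by
    refine ⟨fun _ => 1, ?_⟩
    have : Nonempty (Fin n) := ⟨⟨0, hn⟩⟩
    simp [Metric.mem_sphere, dist_zero_right, pi_norm_const]
  obtain ⟨u, hu, hmin'⟩ := (isCompact_sphere (0 : Fin n → ℝ) 1).exists_isMinOn hne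
    hcont.continuousOn
  have hmin : ∀ w ∈ Metric.sphere (0 : Fin n → ℝ) 1,
      u ⬝ᵥ M *ᵥ u ≤ w ⬝ᵥ M *ᵥ w := fun w hw => hmin' hw
  have hu1 : ‖u‖ = 1 := by simpa [dist_zero_right] using hu
  have hu0 : u ≠ 0 := by intro h; rw [h] at hu1; simp at hu1
  have hc : 0 < u ⬝ᵥ M *ᵥ u := by
    have := hM.dotProduct_mulVec_pos hu0
    simpa using this
  refine ⟨u ⬝ᵥ M *ᵥ u, hc, fun v => ?_⟩
  rcases eq_or_ne v 0 with rfl | hv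
  · simp
  · have hnv : (0 : ℝ) < ‖v‖ := norm_pos_iff.mpr hv
    set w : Fin n → ℝ := ‖v‖⁻¹ • v with hw
    have hws : w ∈ Metric.sphere (0 : Fin n → ℝ) 1 := by
      simp [hw, dist_zero_right, norm_smul, abs_of_pos (inv_pos.mpr hnv),
        inv_mul_cancel₀ hnv.ne']
    have hexp : ‖v‖ ^ 2 * (w ⬝ᵥ M *ᵥ w) = v ⬝ᵥ M *ᵥ v := by
      rw [hw]
      simp only [Matrix.mulVec_smul, smul_dotProduct, dotProduct_smul,
        smul_eq_mul]
      field_simp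
    rw [← hexp]
    have := hmin w hws
    nlinarith [sq_nonneg ‖v‖, this, hnv]

lemma quad_pert {B : Matrix (Fin n) (Fin n) ℝ} {ε : ℝ}
    (hB : ∀ i j, |B i j| ≤ ε) (v : Fin n → ℝ) :
    |v ⬝ᵥ B *ᵥ v| ≤ (n : ℝ) ^ 2 * ε * ‖v‖ ^ 2 := by
  have hvi : ∀ i, |v i| ≤ ‖v‖ := fun i => by
    simpa [Real.norm_eq_abs] using norm_le_pi_norm v i
  have h1 : |v ⬝ᵥ B *ᵥ v| ≤ ∑ i, ∑ j, |v i| * |B i j| * |v j| := by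
    calc |v ⬝ᵥ B *ᵥ v| = |∑ i, v i * ∑ j, B i j * v j| := by
          simp [dotProduct, Matrix.mulVec, dotProduct]
      _ ≤ ∑ i, |v i * ∑ j, B i j * v j| := Finset.abs_sum_le_sum_abs _ _
      _ ≤ ∑ i, ∑ j, |v i| * |B i j| * |v j| := by
          refine Finset.sum_le_sum fun i _ => ?_
          rw [abs_mul]
          calc |v i| * |∑ j, B i j * v j| ≤ |v i| * ∑ j, |B i j| * |v j| := by
                refine mul_le_mul_of_nonneg_left ?_ (abs_nonneg _)
                refine le_trans (Finset.abs_sum_le_sum_abs _ _) ?_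
                exact Finset.sum_le_sum fun j _ => (abs_mul _ _).le
            _ = ∑ j, |v i| * |B i j| * |v j| := by
                rw [Finset.mul_sum]; exact Finset.sum_congr rfl fun j _ => by ring
  have h2 : ∑ i, ∑ j, |v i| * |B i j| * |v j| ≤ ∑ i : Fin n, ∑ j : Fin n, ε * ‖v‖ ^ 2 := by
    refine Finset.sum_le_sum fun i _ => Finset.sum_le_sum fun j _ => ?_
    have h3 : |v i| * |B i j| * |v j| ≤ ‖v‖ * ε * ‖v‖ := by
      have hε : (0:ℝ) ≤ ε := le_trans (abs_nonneg _) (hB i j)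
      refine mul_le_mul (mul_le_mul (hvi i) (hB i j) (abs_nonneg _) (norm_nonneg _))
        (hvi j) (abs_nonneg _) ?_
      positivity
    calc |v i| * |B i j| * |v j| ≤ ‖v‖ * ε * ‖v‖ := h3
      _ = ε * ‖v‖ ^ 2 := by ring
  have h4 : (∑ i : Fin n, ∑ j : Fin n, ε * ‖v‖ ^ 2) = (n:ℝ)^2 * ε * ‖v‖^2 := by
    simp [Finset.sum_const]
    ring
  linarith [h1.trans h2, h4.le, h4.ge]

lemma posDef_near {M : Matrix (Fin n) (Fin n) ℝ} (hn : 0 < n) (hM : M.PosDef) :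
    ∃ ε > 0, ∀ N : Matrix (Fin n) (Fin n) ℝ, N.IsHermitian →
      (∀ i j, |N i j - M i j| ≤ ε) → N.PosDef := by
  obtain ⟨c, hc, hbd⟩ := quad_lb hn hM
  refine ⟨c / (2 * (n : ℝ) ^ 2), by positivity, fun N hherm hclose => ?_⟩
  refine Matrix.PosDef.of_dotProduct_mulVec_pos hherm fun v hv => ?_
  have hsv : star v = v := by funext i; simp
  rw [hsv]
  have hpert := quad_pert (B := N - M) (ε := c / (2 * (n : ℝ) ^ 2))
    (fun i j => by simpa [Matrix.sub_apply] using hclose i j) v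
  have hexpand : v ⬝ᵥ N *ᵥ v = v ⬝ᵥ M *ᵥ v + v ⬝ᵥ (N - M) *ᵥ v := by
    rw [Matrix.sub_mulVec, dotProduct_sub]; ring
  have hnv : (0 : ℝ) < ‖v‖ := norm_pos_iff.mpr hv
  have hn2 : (0 : ℝ) < (n : ℝ) ^ 2 := by positivity
  have key : (n : ℝ) ^ 2 * (c / (2 * (n : ℝ) ^ 2)) = c / 2 := by
    field_simp
  rw [hexpand]
  have h1 := hbd v
  have h2 : |v ⬝ᵥ (N - M) *ᵥ v| ≤ c / 2 * ‖v‖ ^ 2 := by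
    calc |v ⬝ᵥ (N - M) *ᵥ v| ≤ (n : ℝ) ^ 2 * (c / (2 * (n : ℝ) ^ 2)) * ‖v‖ ^ 2 := hpert
      _ = c / 2 * ‖v‖ ^ 2 := by rw [key]
  have h3 : -(c / 2 * ‖v‖ ^ 2) ≤ v ⬝ᵥ (N - M) *ᵥ v := neg_le_of_abs_le h2
  nlinarith [sq_nonneg ‖v‖, mul_pos hc (mul_pos hnv hnv)]

end Aux2

namespace Aux3
open scoped Matrix
open Polynomial

variable {g n : ℕ}

lemma evalMat_smul_poly (X : Fin g → Matrix (Fin n) (Fin n) ℝ) (p : FreeAlgebra ℝ (Fin g))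
    (t : ℝ) :
    evalMat p (fun j => t • X j) =
      ((FreeAlgebra.lift ℝ
          (fun j => (Polynomial.X : ℝ[X]) • (X j).map Polynomial.C) p).map
        (Polynomial.aeval t)) := by
  have key : (FreeAlgebra.lift ℝ (fun j => t • X j)) =
      ((Polynomial.aeval t : ℝ[X] →ₐ[ℝ] ℝ).mapMatrix.comp
        (FreeAlgebra.lift ℝ
          (fun j => (Polynomial.X : ℝ[X]) • (X j).map Polynomial.C))) := by
    apply FreeAlgebra.hom_ext
    funext j
    simp only [Function.comp_apply, FreeAlgebra.lift_ι_apply, AlgHom.coe_comp,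
      AlgHom.mapMatrix_apply]
    ext i k
    rw [Matrix.smul_apply, Matrix.map_apply, Matrix.smul_apply, Matrix.map_apply,
      smul_eq_mul, smul_eq_mul, map_mul, Polynomial.aeval_X, Polynomial.aeval_C]
    simp [mul_comm]
  have h := DFunLike.congr_fun key p
  rw [evalMat, h, AlgHom.comp_apply, AlgHom.mapMatrix_apply]

lemma det_poly (A : Matrix (Fin n) (Fin n) ℝ) (X : Fin g → Matrix (Fin n) (Fin n) ℝ)
    (p : FreeAlgebra ℝ (Fin g)) :
    ∃ P : Polynomial ℝ, ∀ t : ℝ,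
      P.eval t = (A - evalMat p (fun j => t • X j)).det := by
  set Q := (FreeAlgebra.lift ℝ
      (fun j => (Polynomial.X : ℝ[X]) • (X j).map Polynomial.C) p) with hQ
  refine ⟨(A.map Polynomial.C - Q).det, fun t => ?_⟩
  have h1 : Polynomial.aeval t (A.map Polynomial.C - Q).det
      = ((A.map Polynomial.C - Q).map (Polynomial.aeval t)).det :=
    AlgHom.map_det (Polynomial.aeval t) _
  have h2 : ((A.map Polynomial.C - Q).map (Polynomial.aeval t) : Matrix (Fin n) (Fin n) ℝ)
      = A - evalMat p (fun j => t • X j) := by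
    rw [evalMat_smul_poly X p t, ← hQ]
    ext i k
    simp [Matrix.map_apply, Matrix.sub_apply]
  rw [← h2, ← h1, ← Polynomial.coe_aeval_eq_eval]

lemma smul_one_posDef {ε : ℝ} (hε : 0 < ε) :
    (ε • (1 : Matrix (Fin n) (Fin n) ℝ)).PosDef := by
  refine Matrix.PosDef.of_dotProduct_mulVec_pos ?_ ?_
  · rw [Matrix.IsHermitian, Matrix.conjTranspose_smul]
    simp [Matrix.isHermitian_one.eq]
  · intro v hv
    have : (ε • (1 : Matrix (Fin n) (Fin n) ℝ)) *ᵥ v = ε • v := by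
      rw [Matrix.smul_mulVec, Matrix.one_mulVec]
    rw [this]
    have hsv : star v = v := by funext i; simp
    rw [hsv, dotProduct_smul, smul_eq_mul]
    have hdp : 0 < v ⬝ᵥ v := by
      have := Matrix.dotProduct_star_self_pos_iff (v := v)
      rw [hsv] at this
      exact this.mpr hv
    exact mul_pos hε hdp

lemma posDef_of_det_ne_zero {M : Matrix (Fin n) (Fin n) ℝ} (h : M.PosSemidef)
    (hd : M.det ≠ 0) : M.PosDef := by
  refine Matrix.PosDef.of_dotProduct_mulVec_pos h.1 fun v hv => ?_
  rcases lt_or_eq_of_le (h.dotProduct_mulVec_nonneg v) with hlt | heq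
  · exact hlt
  · exfalso
    have hker : M *ᵥ v = 0 := (h.dotProduct_mulVec_zero_iff v).mp heq.symm
    have hu : IsUnit M.det := hd.isUnit
    have : v = 0 := by
      have h1 : M⁻¹ * M = 1 := Matrix.nonsing_inv_mul M hu
      calc v = (1 : Matrix (Fin n) (Fin n) ℝ) *ᵥ v := (Matrix.one_mulVec v).symm
        _ = (M⁻¹ * M) *ᵥ v := by rw [h1]
        _ = M⁻¹ *ᵥ (M *ᵥ v) := (Matrix.mulVec_mulVec _ _ _).symm
        _ = 0 := by rw [hker, Matrix.mulVec_zero]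
    exact hv this

end Aux3

namespace Aux4
open scoped Matrix

variable {g n : ℕ}

lemma isSymm_smul {t : ℝ} {M : Matrix (Fin n) (Fin n) ℝ} (h : M.IsSymm) :
    (t • M).IsSymm := by
  rw [Matrix.IsSymm, Matrix.transpose_smul, h]

lemma zero_tuple_mem (hn : 0 < n) {p : FreeAlgebra ℝ (Fin g)} (hqc : IsQuasiConvex p)
    (B : Matrix (Fin n) (Fin n) ℝ) (hB : B.PosDef) :
    (fun _ => (0 : Matrix (Fin n) (Fin n) ℝ)) ∈
      {X : Fin g → Matrix (Fin n) (Fin n) ℝ |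
        (∀ j, (X j).IsSymm) ∧ (B - evalMat p X).PosDef} := by
  refine ⟨fun j => by simp [Matrix.IsSymm], ?_⟩
  rw [hqc.1 n, sub_zero]
  exact hB

lemma psd_segment (hn : 0 < n) {p : FreeAlgebra ℝ (Fin g)} (hsym : star p = p)
    (hqc : IsQuasiConvex p) {A : Matrix (Fin n) (Fin n) ℝ} (hA : A.PosDef)
    {X : Fin g → Matrix (Fin n) (Fin n) ℝ} (hX : ∀ j, (X j).IsSymm)
    (hpsd : (A - evalMat p X).PosSemidef)
    {t : ℝ} (ht0 : 0 ≤ t) (ht1 : t ≤ 1) :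
    (A - evalMat p (fun j => t • X j)).PosSemidef := by
  have hherm : (A - evalMat p (fun j => t • X j)).IsHermitian :=
    Aux.isHermitian_sub A hA.1 hsym _ (fun j => isSymm_smul (hX j))
  -- for every ε > 0, (A + ε•1) - p(tX) is positive definite
  have key : ∀ ε : ℝ, 0 < ε →
      ((A + ε • (1 : Matrix (Fin n) (Fin n) ℝ)) - evalMat p (fun j => t • X j)).PosDef := by
    intro ε hε
    have hAε : (A + ε • (1 : Matrix (Fin n) (Fin n) ℝ)).PosDef :=
      hA.add_posSemidef (Aux3.smul_one_posDef hε).posSemidef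
    have hconv := hqc.2 n hn _ hAε
    have memX : X ∈ {Y : Fin g → Matrix (Fin n) (Fin n) ℝ |
        (∀ j, (Y j).IsSymm) ∧ ((A + ε • 1) - evalMat p Y).PosDef} := by
      refine ⟨hX, ?_⟩
      rw [add_sub_right_comm]
      exact Matrix.PosDef.posSemidef_add hpsd (Aux3.smul_one_posDef hε)
    have mem0 := zero_tuple_mem hn hqc _ hAε
    have hcombo := hconv memX mem0 (a := t) (b := 1 - t) ht0 (by linarith) (by ring)
    have heq : t • X + (1 - t) • (fun _ => (0 : Matrix (Fin n) (Fin n) ℝ))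
        = fun j => t • X j := by
      funext j
      simp
    rw [heq] at hcombo
    exact hcombo.2
  refine Matrix.PosSemidef.of_dotProduct_mulVec_nonneg hherm fun v => ?_
  have hsv : star v = v := by funext i; simp
  rw [hsv]
  rcases eq_or_ne v 0 with rfl | hv
  · simp
  · by_contra hneg
    push_neg at hneg
    set q := v ⬝ᵥ (A - evalMat p (fun j => t • X j)) *ᵥ v with hq
    have hdp : 0 < v ⬝ᵥ v := by
      have h' := Matrix.dotProduct_star_self_pos_iff (v := v)
      rw [hsv] at h'
      exact h'.mpr hv
    have hqneg : q < 0 := hneg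
    set ε : ℝ := -q / (2 * (v ⬝ᵥ v)) with hεdef
    have hε : 0 < ε := by
      apply div_pos (by linarith) (by linarith)
    have hPD := (key ε hε).dotProduct_mulVec_pos hv
    rw [hsv] at hPD
    have hexpand : ((A + ε • (1 : Matrix (Fin n) (Fin n) ℝ))
        - evalMat p (fun j => t • X j)) *ᵥ v
        = ((A - evalMat p (fun j => t • X j)) *ᵥ v) + ε • v := by
      rw [add_sub_right_comm, Matrix.add_mulVec, Matrix.smul_mulVec,
        Matrix.one_mulVec]
    rw [hexpand, dotProduct_add, dotProduct_smul, smul_eq_mul] at hPD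
    have : ε * (v ⬝ᵥ v) = -q / 2 := by
      rw [hεdef]
      field_simp
    rw [← hq, this] at hPD
    linarith

lemma pd_segment (hn : 0 < n) {p : FreeAlgebra ℝ (Fin g)} (hsym : star p = p)
    (hqc : IsQuasiConvex p) {A : Matrix (Fin n) (Fin n) ℝ} (hA : A.PosDef)
    {X : Fin g → Matrix (Fin n) (Fin n) ℝ} (hX : ∀ j, (X j).IsSymm)
    (hpsd : (A - evalMat p X).PosSemidef)
    {t : ℝ} (ht0 : 0 < t) (ht1 : t < 1) :
    (A - evalMat p (fun j => t • X j)).PosDef := by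
  obtain ⟨P, hP⟩ := Aux3.det_poly A X p
  have hP0 : P.eval 0 = A.det := by
    rw [hP 0]
    have : (fun j => (0 : ℝ) • X j) = fun _ : Fin g => (0 : Matrix (Fin n) (Fin n) ℝ) := by
      funext j; simp
    rw [this, hqc.1 n, sub_zero]
  have hPne : P ≠ 0 := by
    intro h
    rw [h, Polynomial.eval_zero] at hP0
    exact hA.det_pos.ne hP0
  have hroots : {x : ℝ | P.IsRoot x}.Finite := Polynomial.finite_setOf_isRoot hPne
  have hIoo : (Set.Ioo t 1).Infinite := Set.infinite_coe_iff.mp (Set.Ioo.infinite ht1)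
  have hex : ∃ t₂ ∈ Set.Ioo t 1, ¬ P.IsRoot t₂ := by
    by_contra hcon
    push_neg at hcon
    exact hIoo (hroots.subset hcon)
  obtain ⟨t₂, ht₂, hroot⟩ := hex
  have ht₂0 : 0 < t₂ := lt_trans ht0 ht₂.1
  have hpsd₂ := psd_segment hn hsym hqc hA hX hpsd ht₂0.le ht₂.2.le
  have hdet₂ : (A - evalMat p (fun j => t₂ • X j)).det ≠ 0 := by
    rw [← hP t₂]
    exact hroot
  have hPD₂ := Aux3.posDef_of_det_ne_zero hpsd₂ hdet₂
  -- convexity of D(A) between 0 and t₂ • X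
  have hconv := hqc.2 n hn A hA
  have memT₂ : (fun j => t₂ • X j) ∈ {Y : Fin g → Matrix (Fin n) (Fin n) ℝ |
      (∀ j, (Y j).IsSymm) ∧ (A - evalMat p Y).PosDef} :=
    ⟨fun j => isSymm_smul (hX j), hPD₂⟩
  have mem0 := zero_tuple_mem hn hqc A hA
  have ha0 : (0:ℝ) ≤ t / t₂ := div_nonneg ht0.le ht₂0.le
  have ha1 : t / t₂ ≤ 1 := (div_le_one ht₂0).mpr ht₂.1.le
  have hcombo := hconv memT₂ mem0 (a := t / t₂) (b := 1 - t / t₂) ha0 (by linarith) (by ring)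
  have heq : (t / t₂) • (fun j => t₂ • X j)
      + (1 - t / t₂) • (fun _ => (0 : Matrix (Fin n) (Fin n) ℝ))
      = fun j => t • X j := by
    funext j
    simp [smul_smul, div_mul_cancel₀ _ ht₂0.ne']
  rw [heq] at hcombo
  exact hcombo.2

end Aux4

open scoped Matrix

/-- for quasi-convex `p` and positive definite `A`, a symmetric tuple `X` is in
the boundary of `D(A)` (inside `𝕊ₙ(ℝ^g)`) iff `A − p(X)` is positive semidefinite with
nontrivial kernel. -/
theorem stmt_9 (g n : ℕ) (hn : 0 < n) (p : FreeAlgebra ℝ (Fin g))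
    (hsym : star p = p) (hqc : IsQuasiConvex p)
    (A : Matrix (Fin n) (Fin n) ℝ) (hA : A.PosDef)
    (X : {Y : Fin g → Matrix (Fin n) (Fin n) ℝ // ∀ j, (Y j).IsSymm}) :
    X ∈ frontier {Y : {Y : Fin g → Matrix (Fin n) (Fin n) ℝ // ∀ j, (Y j).IsSymm} |
        (A - evalMat p Y.1).PosDef} ↔
      (A - evalMat p X.1).PosSemidef ∧
        ∃ v : Fin n → ℝ, v ≠ 0 ∧ (A - evalMat p X.1).mulVec v = 0 := by
  set S := {Y : {Y : Fin g → Matrix (Fin n) (Fin n) ℝ // ∀ j, (Y j).IsSymm} |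
      (A - evalMat p Y.1).PosDef} with hS
  set F : {Y : Fin g → Matrix (Fin n) (Fin n) ℝ // ∀ j, (Y j).IsSymm} →
      Matrix (Fin n) (Fin n) ℝ := fun Y => A - evalMat p Y.1 with hF
  have hFc : Continuous F :=
    continuous_const.sub ((Aux.evalMat_continuous p).comp continuous_subtype_val)
  have hherm : ∀ Y : {Y : Fin g → Matrix (Fin n) (Fin n) ℝ // ∀ j, (Y j).IsSymm},
      (A - evalMat p Y.1).IsHermitian := fun Y =>
    Aux.isHermitian_sub A hA.1 hsym Y.1 Y.2
  -- closure of S gives positive semidefiniteness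
  have hpsd_of_closure : X ∈ closure S → (A - evalMat p X.1).PosSemidef := by
    intro hcl
    refine Matrix.PosSemidef.of_dotProduct_mulVec_nonneg (hherm X) fun v => ?_
    have hsv : star v = v := by funext i; simp
    rw [hsv]
    have hΦc : Continuous fun Y : {Y : Fin g → Matrix (Fin n) (Fin n) ℝ //
        ∀ j, (Y j).IsSymm} => v ⬝ᵥ (F Y) *ᵥ v :=
      continuous_const.dotProduct (hFc.matrix_mulVec continuous_const)
    have hsub : S ⊆ {Y | 0 ≤ v ⬝ᵥ (F Y) *ᵥ v} := by
      intro Y hY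
      have := hY.posSemidef.dotProduct_mulVec_nonneg v
      rwa [hsv] at this
    have hclosed : IsClosed {Y : {Y : Fin g → Matrix (Fin n) (Fin n) ℝ //
        ∀ j, (Y j).IsSymm} | 0 ≤ v ⬝ᵥ (F Y) *ᵥ v} :=
      isClosed_le continuous_const hΦc
    exact closure_minimal hsub hclosed hcl
  -- positive definiteness puts X in the interior of S
  have hint : (A - evalMat p X.1).PosDef → X ∈ interior S := by
    intro hPD
    obtain ⟨ε, hε, hnear⟩ := Aux2.posDef_near hn hPD
    set U : Set {Y : Fin g → Matrix (Fin n) (Fin n) ℝ // ∀ j, (Y j).IsSymm} :=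
      ⋂ i, ⋂ k, {Y | |F Y i k - F X i k| < ε} with hU
    have hUopen : IsOpen U := by
      refine isOpen_iInter_of_finite fun i => isOpen_iInter_of_finite fun k => ?_
      exact isOpen_lt (((hFc.matrix_elem i k).sub continuous_const).abs) continuous_const
    have hXU : X ∈ U := by
      simp only [hU, Set.mem_iInter, Set.mem_setOf_eq]
      intro i k
      simpa using hε
    have hUS : U ⊆ S := by
      intro Y hY
      refine hnear (F Y) (hherm Y) fun i k => ?_
      have h1 := Set.mem_iInter.mp (Set.mem_iInter.mp hY i) k
      exact le_of_lt h1
    exact mem_interior.mpr ⟨U, hUS, hUopen, hXU⟩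
  -- positive semidefiniteness puts X in the closure of S
  have hclo : (A - evalMat p X.1).PosSemidef → X ∈ closure S := by
    intro hpsd
    set c : ℝ → {Y : Fin g → Matrix (Fin n) (Fin n) ℝ // ∀ j, (Y j).IsSymm} :=
      fun t => ⟨fun j => t • X.1 j, fun j => Aux4.isSymm_smul (X.2 j)⟩ with hc
    have hcc : Continuous c := by
      refine Continuous.subtype_mk (continuous_pi fun j => ?_) _
      exact continuous_id.smul continuous_const
    have hmaps : c '' Set.Ioo (0:ℝ) 1 ⊆ S := by
      rintro Y ⟨t, ht, rfl⟩
      exact Aux4.pd_segment hn hsym hqc hA X.2 hpsd ht.1 ht.2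
    have h1 : (1:ℝ) ∈ closure (Set.Ioo (0:ℝ) 1) := by
      rw [closure_Ioo (by norm_num : (0:ℝ) ≠ 1)]
      exact ⟨by norm_num, le_refl 1⟩
    have hX1 : X = c 1 := by
      apply Subtype.ext
      funext j
      simp [hc]
    have himg : X ∈ c '' closure (Set.Ioo (0:ℝ) 1) := ⟨1, h1, hX1.symm⟩
    have hsub := image_closure_subset_closure_image hcc (s := Set.Ioo (0:ℝ) 1)
    exact closure_mono hmaps (hsub himg)
  constructor
  · intro hX
    have hcl : X ∈ closure S := hX.1
    have hpsd := hpsd_of_closure hcl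
    have hnotPD : ¬ (A - evalMat p X.1).PosDef := fun h => hX.2 (hint h)
    refine ⟨hpsd, ?_⟩
    by_contra hcon
    push_neg at hcon
    apply hnotPD
    refine Matrix.PosDef.of_dotProduct_mulVec_pos (hherm X) fun v hv => ?_
    have h0 : star v ⬝ᵥ (A - evalMat p X.1) *ᵥ v ≠ 0 := by
      intro h
      exact hcon v hv ((hpsd.dotProduct_mulVec_zero_iff v).mp h)
    exact lt_of_le_of_ne (hpsd.dotProduct_mulVec_nonneg v) (Ne.symm h0)
  · rintro ⟨hpsd, v, hv, hker⟩
    have hnotS : X ∉ S := by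
      intro hXS
      have := hXS.dotProduct_mulVec_pos hv
      rw [show (A - evalMat p X.1) *ᵥ v = 0 from hker, dotProduct_zero] at this
      exact lt_irrefl 0 this
    exact ⟨hclo hpsd, fun h => hnotS (interior_subset h)⟩
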